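/- Fix $x\in X$, where $X\subset\mathbb{R}^N$ is compact with $\dim_H X<k$, and let $\phi:X\to\mathbb{R}^k$ be Lipschitz. Then the set of maps $L\in E$ (linear maps given by $k$ vectors in the unit ball of $\mathbb{R}^N$) for which there exists $y\in X\setminus\{x\}$ with $\phi(x)+Lx=\phi(y)+Ly$ has Lebesgue measure zero. -/

import Mathlib

open MeasureTheory Metric Set
open scoped NNReal ENNReal

/-- The normalized `k`-fold product of the normalized Lebesgue measure on the closed
unit ball of `ℝ^N`, i.e. the natural probability measure on the parameter space
`E = (B_N(0,1))^k` of linear maps `L x = (⟪l 1, x⟫, …, ⟪l k, x⟫)`. -/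
noncomputable def LebE (N k : ℕ) : Measure (Fin k → EuclideanSpace ℝ (Fin N)) :=
  Measure.pi fun _ =>
    (volume (Metric.closedBall (0 : EuclideanSpace ℝ (Fin N)) 1))⁻¹ •
      volume.restrict (Metric.closedBall (0 : EuclideanSpace ℝ (Fin N)) 1)

lemma abs_coord_le {n : ℕ} (w : EuclideanSpace ℝ (Fin n)) (i : Fin n) : |w i| ≤ ‖w‖ := by
  rw [EuclideanSpace.norm_eq]
  rw [← Real.sqrt_sq_eq_abs]
  apply Real.sqrt_le_sqrt
  calc w i ^ 2 = ‖w i‖ ^ 2 := by rw [Real.norm_eq_abs, sq_abs]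
    _ ≤ ∑ j, ‖w j‖ ^ 2 :=
      Finset.single_le_sum (f := fun j => ‖w j‖ ^ 2) (fun j _ => sq_nonneg _) (Finset.mem_univ i)

lemma slab_vol {N : ℕ} (u : EuclideanSpace ℝ (Fin N)) (hu : u ≠ 0) (c ε : ℝ) :
    volume {v : EuclideanSpace ℝ (Fin N) | v ∈ Metric.closedBall 0 1 ∧ |(inner ℝ v u : ℝ) - c| ≤ ε} ≤
      ENNReal.ofReal (2 * ε / ‖u‖) * 2 ^ (N - 1) := by
  have hN : 0 < N := by
    rcases Nat.eq_zero_or_pos N with h | h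
    · subst h; exact absurd (Subsingleton.elim u 0) hu
    · exact h
  set i0 : Fin N := ⟨0, hN⟩ with hi0
  have hnu : 0 < ‖u‖ := norm_pos_iff.mpr hu
  set e : EuclideanSpace ℝ (Fin N) := ‖u‖⁻¹ • u with he
  have hne : ‖e‖ = 1 := by
    rw [he, norm_smul, norm_inv, norm_norm, inv_mul_cancel₀ hnu.ne']
  obtain ⟨b, hb⟩ : ∃ b : OrthonormalBasis (Fin N) ℝ (EuclideanSpace ℝ (Fin N)), b i0 = e := by
    have horth : Orthonormal ℝ (({i0} : Set (Fin N)).restrict (fun _ : Fin N => e)) := by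
      constructor
      · intro i; exact hne
      · intro i j hij; exact absurd (Subsingleton.elim i j) hij
    obtain ⟨b, hb⟩ := horth.exists_orthonormalBasis_extension_of_card_eq (by simp)
    exact ⟨b, hb i0 rfl⟩
  set a : ℝ := (c - ε) / ‖u‖ with ha
  set a' : ℝ := (c + ε) / ‖u‖ with ha'
  set g : Fin N → Set ℝ := fun i => if i = i0 then Icc a a' else Icc (-1 : ℝ) 1 with hg
  have hgm : ∀ i, MeasurableSet (g i) := by
    intro i; by_cases h : i = i0 <;> simp [hg, h, measurableSet_Icc]
  set W : Set (EuclideanSpace ℝ (Fin N)) :=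
    (MeasurableEquiv.toLp 2 (Fin N → ℝ)).symm ⁻¹' (Set.pi univ g) with hW
  have hWm : MeasurableSet W :=
    (MeasurableEquiv.toLp 2 (Fin N → ℝ)).symm.measurable (MeasurableSet.univ_pi hgm)
  have hsub : {v : EuclideanSpace ℝ (Fin N) | v ∈ Metric.closedBall 0 1 ∧
      |(inner ℝ v u : ℝ) - c| ≤ ε} ⊆ (b.repr : EuclideanSpace ℝ (Fin N) → EuclideanSpace ℝ (Fin N)) ⁻¹' W := by
    rintro v ⟨hv1, hv2⟩
    have hv1' : ‖v‖ ≤ 1 := by rwa [mem_closedBall, dist_zero_right] at hv1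
    intro i _
    show b.repr v i ∈ g i
    by_cases h : i = i0
    · subst h
      have hrepr : b.repr v i0 = (inner ℝ e v : ℝ) := by rw [b.repr_apply_apply, hb]
      have h3 : (inner ℝ e v : ℝ) = ‖u‖⁻¹ * inner ℝ u v := by rw [he, real_inner_smul_left]
      have hiu : (inner ℝ v u : ℝ) = ‖u‖ * b.repr v i0 := by
        rw [hrepr, h3, real_inner_comm v u]; field_simp
      rw [hiu] at hv2
      have h1 := abs_le.mp hv2
      simp only [hg, if_pos rfl, mem_Icc]
      constructor
      · rw [ha, div_le_iff₀ hnu]; nlinarith [h1.1]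
      · rw [ha', le_div_iff₀ hnu]; nlinarith [h1.2]
    · have : |b.repr v i| ≤ 1 := by
        calc |b.repr v i| ≤ ‖b.repr v‖ := abs_coord_le _ _
          _ = ‖v‖ := b.repr.norm_map v
          _ ≤ 1 := hv1'
      simp only [hg, if_neg h, mem_Icc]
      exact abs_le.mp this
  calc volume {v : EuclideanSpace ℝ (Fin N) | v ∈ Metric.closedBall 0 1 ∧ |(inner ℝ v u : ℝ) - c| ≤ ε}
      ≤ volume ((b.repr : EuclideanSpace ℝ (Fin N) → EuclideanSpace ℝ (Fin N)) ⁻¹' W) :=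
        measure_mono hsub
    _ = volume W := b.measurePreserving_repr.measure_preimage hWm.nullMeasurableSet
    _ = volume (Set.pi univ g) :=
        ((EuclideanSpace.volume_preserving_symm_measurableEquiv_toLp (Fin N)).measure_preimage
          (MeasurableSet.univ_pi hgm).nullMeasurableSet)
    _ = ∏ i, volume (g i) := volume_pi_pi g
    _ ≤ ENNReal.ofReal (2 * ε / ‖u‖) * 2 ^ (N - 1) := by
        rw [← Finset.mul_prod_erase Finset.univ _ (Finset.mem_univ i0)]
        have h1 : volume (g i0) = ENNReal.ofReal (2 * ε / ‖u‖) := by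
          simp only [hg, if_pos rfl, Real.volume_Icc]
          congr 1
          rw [ha, ha', div_sub_div_same]; ring_nf
        have h2 : ∏ i ∈ Finset.univ.erase i0, volume (g i) = 2 ^ (N - 1) := by
          rw [Finset.prod_congr rfl (fun i hi => ?_), Finset.prod_const,
            Finset.card_erase_of_mem (Finset.mem_univ i0), Finset.card_univ, Fintype.card_fin]
          rw [hg]
          simp only [if_neg (Finset.mem_erase.mp hi).1, Real.volume_Icc]
          norm_num
        rw [h1, h2]

abbrev EE (N : ℕ) := EuclideanSpace ℝ (Fin N)

lemma bad_eta_null (N k : ℕ) (hk : 1 ≤ k) (hkN : k ≤ N)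
    (X : Set (EuclideanSpace ℝ (Fin N)))
    (hdim : dimH X < (k : ℝ≥0∞))
    (φ : EuclideanSpace ℝ (Fin N) → EuclideanSpace ℝ (Fin k))
    (K : ℝ≥0) (hφ : LipschitzOnWith K φ X)
    (x : EuclideanSpace ℝ (Fin N)) (η : ℝ) (hη : 0 < η) :
    LebE N k {l | ∃ y ∈ X, η ≤ dist y x ∧
        φ x + (show EuclideanSpace ℝ (Fin k) from WithLp.toLp 2 (fun i => (inner ℝ (l i) x : ℝ))) =
          φ y + (show EuclideanSpace ℝ (Fin k) from WithLp.toLp 2 (fun i => (inner ℝ (l i) y : ℝ)))} = 0 := by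
  classical
  have hNpos : 0 < N := lt_of_lt_of_le hk hkN
  set B : Set (EE N) := Metric.closedBall (0 : (EE N)) 1 with hBdef
  set c : ℝ≥0∞ := volume B with hcdef
  have hc0 : c ≠ 0 := by
    have : (0 : ℝ≥0∞) < volume (Metric.ball (0 : (EE N)) 1) :=
      measure_ball_pos volume (0 : (EE N)) one_pos
    exact (this.trans_le (measure_mono Metric.ball_subset_closedBall)).ne'
  have hcT : c ≠ ⊤ := measure_closedBall_lt_top.ne
  set ν : Measure (EE N) := c⁻¹ • volume.restrict B with hνdef
  haveI : IsFiniteMeasure ν := by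
    constructor
    rw [hνdef, Measure.smul_apply, Measure.restrict_apply MeasurableSet.univ, univ_inter,
      smul_eq_mul, ← hcdef, ENNReal.inv_mul_cancel hc0 hcT]
    exact ENNReal.one_lt_top
  -- exponent
  have hdt : dimH X ≠ ⊤ := (hdim.trans_le le_top).ne
  set dd : ℝ≥0 := ((dimH X).toNNReal + k) / 2 with hdd
  have hcoe : dimH X = ((dimH X).toNNReal : ℝ≥0∞) := (ENNReal.coe_toNNReal hdt).symm
  have htk : (dimH X).toNNReal < (k : ℝ≥0) := by
    rw [← ENNReal.coe_lt_coe, ← hcoe]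
    simpa using hdim
  have hdd1 : dimH X < (dd : ℝ≥0∞) := by
    rw [hcoe, ENNReal.coe_lt_coe, hdd]
    rw [← NNReal.coe_lt_coe]
    push_cast
    have := NNReal.coe_lt_coe.mpr htk
    push_cast at this
    linarith
  have hdd2 : (dd : ℝ) ≤ (k : ℝ) := by
    have := NNReal.coe_lt_coe.mpr htk
    push_cast at this ⊢
    rw [hdd]
    push_cast
    linarith
  have hdd3 : (0 : ℝ) < (dd : ℝ) := by
    rw [hdd]
    push_cast
    have h1 : (0:ℝ) ≤ (dimH X).toReal := ENNReal.toReal_nonneg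
    have h2 : (1:ℝ) ≤ (k : ℝ) := by exact_mod_cast hk
    linarith
  have hH : μH[(dd : ℝ)] X = 0 := hausdorffMeasure_of_dimH_lt hdd1
  rw [MeasureTheory.Measure.hausdorffMeasure_apply] at hH
  have hF : (⨅ (t : ℕ → Set (EE N)) (_ : X ⊆ ⋃ n, t n) (_ : ∀ n, EMetric.diam (t n) ≤ 1),
      ∑' n, ⨆ _ : (t n).Nonempty, EMetric.diam (t n) ^ (dd : ℝ)) = 0 := by
    refine le_antisymm ?_ zero_le
    rw [← hH]
    exact le_iSup₂ (f := fun (r : ℝ≥0∞) (_ : 0 < r) =>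
      ⨅ (t : ℕ → Set (EE N)) (_ : X ⊆ ⋃ n, t n) (_ : ∀ n, EMetric.diam (t n) ≤ r),
        ∑' n, ⨆ _ : (t n).Nonempty, EMetric.diam (t n) ^ (dd : ℝ)) 1 one_pos
  set A : ℝ≥0∞ := c⁻¹ * 2 ^ (N - 1) * ENNReal.ofReal (2 * (1 + (K : ℝ)) / η) with hAdef
  have hA0 : A ≠ 0 := by
    rw [hAdef]
    refine mul_ne_zero (mul_ne_zero (ENNReal.inv_ne_zero.mpr hcT) ?_) ?_
    · exact pow_ne_zero _ (by norm_num)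
    · rw [Ne, ENNReal.ofReal_eq_zero, not_le]
      positivity
  have hAT : A ≠ ⊤ := by
    rw [hAdef]
    apply ENNReal.mul_ne_top (ENNReal.mul_ne_top _ _) ENNReal.ofReal_ne_top
    · exact ENNReal.inv_ne_top.mpr hc0
    · exact (ENNReal.pow_ne_top (by norm_num))
  set Bad : Set (Fin k → (EE N)) := {l | ∃ y ∈ X, η ≤ dist y x ∧
        φ x + (show EuclideanSpace ℝ (Fin k) from WithLp.toLp 2 (fun i => (inner ℝ (l i) x : ℝ))) =
          φ y + (show EuclideanSpace ℝ (Fin k) from WithLp.toLp 2 (fun i => (inner ℝ (l i) y : ℝ)))} with hBad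
  have key : ∀ δ : ℝ≥0∞, 0 < δ → LebE N k Bad ≤ A ^ k * δ := by
    intro δ hδ
    have hFδ : (⨅ (t : ℕ → Set (EE N)) (_ : X ⊆ ⋃ n, t n) (_ : ∀ n, EMetric.diam (t n) ≤ 1),
        ∑' n, ⨆ _ : (t n).Nonempty, EMetric.diam (t n) ^ (dd : ℝ)) < δ := hF ▸ hδ
    rw [iInf_lt_iff] at hFδ
    obtain ⟨t, hFδ⟩ := hFδ
    rw [iInf_lt_iff] at hFδ
    obtain ⟨hcover, hFδ⟩ := hFδ
    rw [iInf_lt_iff] at hFδ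
    obtain ⟨hdiam, hsum⟩ := hFδ
    -- setup
    set D : ℕ → ℝ := fun n => Metric.diam (t n) with hD
    have hdne : ∀ n, EMetric.diam (t n) ≠ ⊤ := fun n =>
      ne_top_of_le_ne_top ENNReal.one_ne_top (hdiam n)
    have hDeq : ∀ n, EMetric.diam (t n) = ENNReal.ofReal (D n) := fun n =>
      (ENNReal.ofReal_toReal (hdne n)).symm
    have hdist : ∀ n, ∀ y ∈ t n, ∀ z ∈ t n, dist y z ≤ D n := fun n y hy z hz =>
      Metric.dist_le_diam_of_mem (Metric.isBounded_iff_ediam_ne_top.mpr (hdne n)) hy hz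
    have hD0 : ∀ n, 0 ≤ D n := fun n => Metric.diam_nonneg
    set P : ℕ → Set (EE N) := fun n => t n ∩ (X ∩ {z | η ≤ dist z x}) with hP
    set yc : ℕ → (EE N) := fun n => if h : (P n).Nonempty then h.choose else x with hyc
    have hycP : ∀ n, (P n).Nonempty → yc n ∈ P n := by
      intro n h
      rw [hyc]
      simp only [dif_pos h]
      exact h.choose_spec
    set T : ℕ → Fin k → Set (EE N) := fun n i =>
      {v | v ∈ B → |(inner ℝ v (yc n - x) : ℝ) - (φ x i - φ (yc n) i)| ≤ (1 + (K : ℝ)) * D n}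
      with hT
    have hTmeas : ∀ n i, MeasurableSet (T n i) := by
      intro n i
      have : T n i = Bᶜ ∪ {v : (EE N) | |(inner ℝ v (yc n - x) : ℝ) - (φ x i - φ (yc n) i)|
          ≤ (1 + (K : ℝ)) * D n} := by
        ext v; simp [hT, imp_iff_not_or]
      rw [this]
      refine (measurableSet_closedBall.compl).union ?_
      have hcont : Continuous fun v : (EE N) => |(inner ℝ v (yc n - x) : ℝ) - (φ x i - φ (yc n) i)| :=
        ((Continuous.inner continuous_id continuous_const).sub continuous_const).abs
      exact (isClosed_le hcont continuous_const).measurableSet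
    set S : ℕ → Set (Fin k → (EE N)) := fun n =>
      if (P n).Nonempty then Set.pi univ (T n) else ∅ with hS
    -- containment
    have hsub : Bad ⊆ ⋃ n, S n := by
      rintro l ⟨y, hyX, hyd, heq⟩
      obtain ⟨n, hyn⟩ : ∃ n, y ∈ t n := by
        have := hcover hyX
        simpa using this
      have hPn : (P n).Nonempty := ⟨y, hyn, hyX, hyd⟩
      obtain ⟨hyct, hycX, hycd⟩ := hycP n hPn
      refine mem_iUnion.mpr ⟨n, ?_⟩
      rw [hS]
      simp only [if_pos hPn]
      intro i _
      intro hBi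
      have hli : ‖l i‖ ≤ 1 := by rwa [hBdef, mem_closedBall, dist_zero_right] at hBi
      have hcoord : (inner ℝ (l i) y : ℝ) - inner ℝ (l i) x = φ x i - φ y i := by
        have h1 := congrArg (fun w => w i) heq
        have h2 : φ x i + (inner ℝ (l i) x : ℝ) = φ y i + inner ℝ (l i) y := h1
        linarith
      have e1 : (inner ℝ (l i) (yc n - x) : ℝ) - (φ x i - φ (yc n) i)
          = inner ℝ (l i) (yc n - y) + (φ (yc n) i - φ y i)
            + (((inner ℝ (l i) y : ℝ) - inner ℝ (l i) x) - (φ x i - φ y i)) := by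
        rw [inner_sub_right, inner_sub_right]; ring
      rw [e1, hcoord, sub_self, add_zero]
      have b1 : |(inner ℝ (l i) (yc n - y) : ℝ)| ≤ D n := by
        calc |(inner ℝ (l i) (yc n - y) : ℝ)| ≤ ‖l i‖ * ‖yc n - y‖ := abs_real_inner_le_norm _ _
          _ ≤ 1 * D n := by
              apply mul_le_mul hli _ (norm_nonneg _) zero_le_one
              rw [← dist_eq_norm]
              exact hdist n _ hyct _ hyn
          _ = D n := one_mul _
      have b2 : |φ (yc n) i - φ y i| ≤ (K : ℝ) * D n := by
        have h3 : (φ (yc n) - φ y) i = φ (yc n) i - φ y i := rfl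
        calc |φ (yc n) i - φ y i| = |(φ (yc n) - φ y) i| := by rw [h3]
          _ ≤ ‖φ (yc n) - φ y‖ := abs_coord_le _ _
          _ = dist (φ (yc n)) (φ y) := (dist_eq_norm _ _).symm
          _ ≤ (K : ℝ) * dist (yc n) y :=
              (lipschitzOnWith_iff_dist_le_mul.mp hφ) (yc n) hycX y hyX
          _ ≤ (K : ℝ) * D n := by
              apply mul_le_mul_of_nonneg_left _ (K.coe_nonneg)
              exact hdist n _ hyct _ hyn
      calc |(inner ℝ (l i) (yc n - y) : ℝ) + (φ (yc n) i - φ y i)|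
          ≤ |(inner ℝ (l i) (yc n - y) : ℝ)| + |φ (yc n) i - φ y i| := abs_add_le _ _
        _ ≤ D n + (K : ℝ) * D n := add_le_add b1 b2
        _ = (1 + (K : ℝ)) * D n := by ring
    -- measure bound
    have hmeas : ∀ n, LebE N k (S n) ≤
        A ^ k * (⨆ _ : (t n).Nonempty, EMetric.diam (t n) ^ (dd : ℝ)) := by
      intro n
      by_cases hPn : (P n).Nonempty
      · obtain ⟨hyct, hycX, hycd⟩ := hycP n hPn
        have htne : (t n).Nonempty := ⟨yc n, hyct⟩
        have hu0 : yc n - x ≠ 0 := by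
          rw [sub_ne_zero]
          intro h
          rw [h] at hycd
          simp at hycd
          linarith
        have hun : η ≤ ‖yc n - x‖ := by
          rw [← dist_eq_norm]
          exact hycd
        have hfac : ∀ i : Fin k, ν (T n i) ≤ A * ENNReal.ofReal (D n) := by
          intro i
          have hint : T n i ∩ B = {v : (EE N) | v ∈ Metric.closedBall (0:(EE N)) 1 ∧
              |(inner ℝ v (yc n - x) : ℝ) - (φ x i - φ (yc n) i)| ≤ (1 + (K : ℝ)) * D n} := by
            ext v
            simp only [hT, mem_inter_iff, mem_setOf_eq, hBdef]
            tauto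
          have hν : ν (T n i) = c⁻¹ * volume (T n i ∩ B) := by
            rw [hνdef, Measure.smul_apply, Measure.restrict_apply (hTmeas n i), smul_eq_mul]
          rw [hν, hint]
          calc c⁻¹ * volume {v : (EE N) | v ∈ Metric.closedBall (0:(EE N)) 1 ∧
                |(inner ℝ v (yc n - x) : ℝ) - (φ x i - φ (yc n) i)| ≤ (1 + (K : ℝ)) * D n}
              ≤ c⁻¹ * (ENNReal.ofReal (2 * ((1 + (K : ℝ)) * D n) / ‖yc n - x‖) * 2 ^ (N - 1)) :=
                mul_le_mul_right (slab_vol _ hu0 _ _) _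
            _ ≤ A * ENNReal.ofReal (D n) := by
                rw [hAdef]
                have h1 : 2 * ((1 + (K : ℝ)) * D n) / ‖yc n - x‖
                    ≤ (2 * (1 + (K : ℝ)) / η) * D n := by
                  rw [div_mul_eq_mul_div, mul_assoc]
                  apply div_le_div_of_nonneg_left _ hη hun |>.trans_eq rfl
                  positivity
                calc c⁻¹ * (ENNReal.ofReal (2 * ((1 + (K : ℝ)) * D n) / ‖yc n - x‖) * 2 ^ (N - 1))
                    ≤ c⁻¹ * (ENNReal.ofReal ((2 * (1 + (K : ℝ)) / η) * D n) * 2 ^ (N - 1)) := by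
                      exact mul_le_mul_right (mul_le_mul_left (ENNReal.ofReal_le_ofReal h1) _) _
                  _ = c⁻¹ * 2 ^ (N - 1) * ENNReal.ofReal (2 * (1 + (K : ℝ)) / η)
                      * ENNReal.ofReal (D n) := by
                      rw [ENNReal.ofReal_mul (by positivity)]
                      ring
        have hpi : LebE N k (S n) = ∏ i : Fin k, ν (T n i) := by
          rw [hS]
          simp only [if_pos hPn]
          rw [LebE]
          rw [← hBdef, ← hcdef, ← hνdef]
          exact Measure.pi_pi _ _
        rw [hpi, iSup_pos htne]
        calc (∏ i : Fin k, ν (T n i)) ≤ ∏ _i : Fin k, (A * ENNReal.ofReal (D n)) :=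
              Finset.prod_le_prod' fun i _ => hfac i
          _ = (A * ENNReal.ofReal (D n)) ^ k := by
              rw [Finset.prod_const, Finset.card_univ, Fintype.card_fin]
          _ = A ^ k * ENNReal.ofReal (D n) ^ k := mul_pow _ _ _
          _ ≤ A ^ k * EMetric.diam (t n) ^ (dd : ℝ) := by
              apply mul_le_mul_right
              rw [← hDeq n]
              by_cases hz : EMetric.diam (t n) = 0
              · rw [hz, ENNReal.zero_rpow_of_pos hdd3, zero_pow (by omega : k ≠ 0)]
              · rw [← ENNReal.rpow_natCast]
                exact ENNReal.rpow_le_rpow_of_exponent_ge (hdiam n) hdd2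
      · rw [hS]
        simp only [if_neg hPn]
        simp
    calc LebE N k Bad ≤ LebE N k (⋃ n, S n) := measure_mono hsub
      _ ≤ ∑' n, LebE N k (S n) := measure_iUnion_le _
      _ ≤ ∑' n, A ^ k * (⨆ _ : (t n).Nonempty, EMetric.diam (t n) ^ (dd : ℝ)) :=
          ENNReal.tsum_le_tsum hmeas
      _ = A ^ k * ∑' n, (⨆ _ : (t n).Nonempty, EMetric.diam (t n) ^ (dd : ℝ)) :=
          ENNReal.tsum_mul_left
      _ ≤ A ^ k * δ := mul_le_mul_right hsum.le _
  -- conclude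
  have hAk0 : A ^ k ≠ 0 := pow_ne_zero _ hA0
  have hAkT : A ^ k ≠ ⊤ := ENNReal.pow_ne_top hAT
  refine le_antisymm ?_ zero_le
  refine ENNReal.le_of_forall_pos_le_add fun ε hε _ => ?_
  rw [zero_add]
  have hδ : (0 : ℝ≥0∞) < (ε : ℝ≥0∞) / A ^ k :=
    ENNReal.div_pos (by exact_mod_cast hε.ne') hAkT
  calc LebE N k Bad ≤ A ^ k * ((ε : ℝ≥0∞) / A ^ k) := key _ hδ
    _ = ε := by
        rw [mul_comm, ENNReal.div_mul_cancel hAk0 hAkT]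

theorem collision_set_null (N k : ℕ) (hk : 1 ≤ k) (hkN : k ≤ N)
    (X : Set (EuclideanSpace ℝ (Fin N))) (hX : IsCompact X)
    (hdim : dimH X < (k : ℝ≥0∞))
    (φ : EuclideanSpace ℝ (Fin N) → EuclideanSpace ℝ (Fin k))
    (hφ : ∃ K : ℝ≥0, LipschitzOnWith K φ X)
    (x : EuclideanSpace ℝ (Fin N)) (hx : x ∈ X) :
    LebE N k {l | ∃ y ∈ X, y ≠ x ∧
        φ x + (show EuclideanSpace ℝ (Fin k) from WithLp.toLp 2 (fun i => (inner ℝ (l i) x : ℝ))) =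
          φ y + (show EuclideanSpace ℝ (Fin k) from WithLp.toLp 2 (fun i => (inner ℝ (l i) y : ℝ)))} = 0 := by
  obtain ⟨K, hφK⟩ := hφ
  have hsub : {l : Fin k → EuclideanSpace ℝ (Fin N) | ∃ y ∈ X, y ≠ x ∧
        φ x + (show EuclideanSpace ℝ (Fin k) from WithLp.toLp 2 (fun i => (inner ℝ (l i) x : ℝ))) =
          φ y + (show EuclideanSpace ℝ (Fin k) from WithLp.toLp 2 (fun i => (inner ℝ (l i) y : ℝ)))} ⊆
      ⋃ m : ℕ, {l : Fin k → EuclideanSpace ℝ (Fin N) | ∃ y ∈ X, 1 / ((m : ℝ) + 1) ≤ dist y x ∧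
        φ x + (show EuclideanSpace ℝ (Fin k) from WithLp.toLp 2 (fun i => (inner ℝ (l i) x : ℝ))) =
          φ y + (show EuclideanSpace ℝ (Fin k) from WithLp.toLp 2 (fun i => (inner ℝ (l i) y : ℝ)))} := by
    rintro l ⟨y, hyX, hyne, heq⟩
    have hpos : 0 < dist y x := dist_pos.mpr hyne
    obtain ⟨m, hm⟩ := exists_nat_one_div_lt hpos
    exact mem_iUnion.mpr ⟨m, y, hyX, hm.le, heq⟩
  refine measure_mono_null hsub (measure_iUnion_null fun m => ?_)
  exact bad_eta_null N k hk hkN X hdim φ K hφK x (1 / ((m : ℝ) + 1)) (by positivity)
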